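/- arXiv:1512.09154 — 4 statements merged into one kernel-verified Lean document; each statement's English description precedes it below -/
import Mathlib

section
/- With R and I as above, for every integer m one has tᵐ − t^{m̄} ∈ I, where m̄ ∈ {0,1} is the residue of m modulo 2. -/
noncomputable section

abbrev R2 : Type := AddMonoidAlgebra ℤ (ℤ × ℤ)

def mono (n m : ℤ) : R2 := AddMonoidAlgebra.single (n, m) 1

def Igen : Set R2 :=
  {x | ∃ n : ℤ, x = mono n n - mono n 0} ∪
  {x | ∃ n m : ℤ, x = mono n m + mono (-n) (m - n)} ∪
  {x | ∃ n m : ℤ, x = mono n m + mono m n} ∪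
  {x | ∃ n m : ℤ, x = mono n m * (1 - mono 0 1) ^ 2}

def I : AddSubgroup R2 := AddSubgroup.closure Igen

abbrev A2 : Type := AddMonoidAlgebra (ZMod 2) (ZMod 2)

def tA (k : ZMod 2) : A2 := AddMonoidAlgebra.single k 1

def Jf (n m : ℤ) : ZMod 2 := ((n + n * m + m : ℤ) : ZMod 2)

def phi : R2 →ₗ[ℤ] A2 :=
  Finsupp.lsum ℤ (fun p : ℤ × ℤ => LinearMap.toSpanSingleton ℤ A2 (tA (Jf p.1 p.2))) ∘ₗ (AddMonoidAlgebra.coeffLinearEquiv ℤ).toLinearMap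

def epsA : A2 →ₐ[ZMod 2] ZMod 2 := (AddMonoidAlgebra.lift (ZMod 2) (ZMod 2) (ZMod 2)) 1

def ev1 : LaurentPolynomial ℤ →ₗ[ℤ] ℤ := Finsupp.lsum ℤ (fun _ => LinearMap.id) ∘ₗ (AddMonoidAlgebra.coeffLinearEquiv ℤ).toLinearMap

def lder : LaurentPolynomial ℤ →ₗ[ℤ] LaurentPolynomial ℤ :=
  Finsupp.lsum ℤ (fun n : ℤ =>
    LinearMap.toSpanSingleton ℤ (LaurentPolynomial ℤ) ((n : ℤ) • LaurentPolynomial.T (n - 1))) ∘ₗ (AddMonoidAlgebra.coeffLinearEquiv ℤ).toLinearMap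

def ev2 : R2 →ₗ[ℤ] ZMod 2 :=
  Finsupp.lsum ℤ (fun _ : ℤ × ℤ => LinearMap.toSpanSingleton ℤ (ZMod 2) 1) ∘ₗ (AddMonoidAlgebra.coeffLinearEquiv ℤ).toLinearMap

lemma mono_mul (a b c d : ℤ) : mono a b * mono c d = mono (a+c) (b+d) := by
  simp [mono, AddMonoidAlgebra.single_mul_single, Prod.mk_add_mk]

lemma one_eq : (1 : R2) = mono 0 0 := by
  simp [mono, AddMonoidAlgebra.one_def]; rfl

lemma gen_a (n : ℤ) : mono n n - mono n 0 ∈ I := by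
  apply AddSubgroup.subset_closure
  exact Or.inl (Or.inl (Or.inl ⟨n, rfl⟩))

lemma gen_c (n m : ℤ) : mono n m + mono m n ∈ I := by
  apply AddSubgroup.subset_closure
  exact Or.inl (Or.inr ⟨n, m, rfl⟩)

lemma gen_d (n m : ℤ) : mono n m * (1 - mono 0 1) ^ 2 ∈ I := by
  apply AddSubgroup.subset_closure
  exact Or.inr ⟨n, m, rfl⟩

lemma two_mem (k : ℤ) : mono 0 k + mono 0 k ∈ I := by
  have h : mono 0 k + mono 0 k =
      (mono 0 k + mono k 0) + (mono 0 k + mono k 0)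
      + ((mono k k - mono k 0) + (mono k k - mono k 0))
      - (mono k k + mono k k) := by ring
  rw [h]
  exact sub_mem (add_mem (add_mem (gen_c 0 k) (gen_c 0 k))
    (add_mem (gen_a k) (gen_a k))) (gen_c k k)

lemma step_mem (m : ℤ) : mono 0 (m+2) - mono 0 m ∈ I := by
  have hd := gen_d 0 m
  have hexp : mono 0 m * (1 - mono 0 1) ^ 2 =
      mono 0 m - (mono 0 (m+1) + mono 0 (m+1)) + mono 0 (m+2) := by
    have : mono 0 m * (1 - mono 0 1) ^ 2 =
        mono 0 m * 1 - (mono 0 m * mono 0 1 + mono 0 m * mono 0 1)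
        + mono 0 m * mono 0 1 * mono 0 1 := by ring
    rw [this, mul_one, mono_mul, mono_mul]; norm_num [add_assoc]
  have h : mono 0 (m+2) - mono 0 m =
      mono 0 m * (1 - mono 0 1) ^ 2 + (mono 0 (m+1) + mono 0 (m+1))
      - (mono 0 m + mono 0 m) := by rw [hexp]; ring
  rw [h]
  exact sub_mem (add_mem hd (two_mem (m+1))) (two_mem m)

lemma chain (k : ℕ) (r : ℤ) : mono 0 (r + 2*k) - mono 0 r ∈ I := by
  induction k with
  | zero => simpa using zero_mem I
  | succ n ih =>
    have h : mono 0 (r + 2*(n+1 : ℕ)) - mono 0 r =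
        (mono 0 ((r + 2*n) + 2) - mono 0 (r + 2*n)) + (mono 0 (r + 2*n) - mono 0 r) := by
      push_cast; ring_nf
    rw [h]
    exact add_mem (step_mem _) ih

theorem stmt2 : ∀ m : ℤ, mono 0 m - mono 0 (m % 2) ∈ I := by
  intro m
  set r := m % 2 with hr
  set q := m / 2 with hq
  have hm : m = r + 2 * q := by rw [hr, hq]; omega
  rcases Int.natAbs_eq q with h | h
  · have : mono 0 m - mono 0 r = mono 0 (r + 2 * (q.natAbs : ℤ)) - mono 0 r := by
      rw [← h, ← hm]
    rw [this]; exact chain q.natAbs r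
  · have : mono 0 m - mono 0 r = -(mono 0 (m + 2 * (q.natAbs : ℤ)) - mono 0 m) := by
      have : r = m + 2 * (q.natAbs : ℤ) := by omega
      rw [this]; ring
    rw [this]; exact neg_mem (chain q.natAbs m)
end
end

section
/- With R and I as above, stᵐ − t ∈ I for every integer m. -/
noncomputable section

lemma Dexp (m : ℤ) :
    mono 1 m * (1 - mono 0 1)^2 = mono 1 m - mono 1 (m+1) - mono 1 (m+1) + mono 1 (m+2) := by
  have h : mono 1 m * (1 - mono 0 1)^2
      = mono 1 m - mono 1 m * mono 0 1 - mono 1 m * mono 0 1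
        + mono 1 m * mono 0 1 * mono 0 1 := by ring
  rw [h, mono_mul, mono_mul, show (m+1+1 : ℤ) = m+2 by ring]
  norm_num

theorem stmt4 : ∀ m : ℤ, mono 1 m - mono 0 1 ∈ I := by
  -- generators
  have hst : mono 1 0 + mono 0 1 ∈ I :=
    AddSubgroup.subset_closure (Or.inl (Or.inr ⟨1, 0, rfl⟩))
  have h2t : mono 0 1 + mono 0 1 ∈ I :=
    AddSubgroup.subset_closure (Or.inl (Or.inl (Or.inr ⟨0, 1, by norm_num⟩)))
  have hA : mono 1 1 - mono 1 0 ∈ I :=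
    AddSubgroup.subset_closure (Or.inl (Or.inl (Or.inl ⟨1, rfl⟩)))
  have hD : ∀ n : ℤ, mono 1 n - mono 1 (n+1) - mono 1 (n+1) + mono 1 (n+2) ∈ I := by
    intro n
    have : mono 1 n * (1 - mono 0 1)^2 ∈ I :=
      AddSubgroup.subset_closure (Or.inr ⟨1, n, rfl⟩)
    rwa [Dexp] at this
  set P : ℤ → Prop := fun n => mono 1 n - mono 0 1 ∈ I with hP
  have hP0 : P 0 := by
    have : mono 1 0 - mono 0 1 =
        (mono 1 0 + mono 0 1) - (mono 0 1 + mono 0 1) := by abel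
    rw [hP]; simp only []; rw [this]; exact I.sub_mem hst h2t
  have hP1 : P 1 := by
    have : mono 1 1 - mono 0 1 =
        (mono 1 1 - mono 1 0) + (mono 1 0 + mono 0 1) - (mono 0 1 + mono 0 1) := by abel
    rw [hP]; simp only []; rw [this]; exact I.sub_mem (I.add_mem hA hst) h2t
  have up : ∀ n : ℤ, P n → P (n+1) → P (n+2) := by
    intro n h0 h1
    have e : mono 1 (n+2) - mono 0 1 =
        (mono 1 n - mono 1 (n+1) - mono 1 (n+1) + mono 1 (n+2))
        + (mono 1 (n+1) - mono 0 1) + (mono 1 (n+1) - mono 0 1)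
        - (mono 1 n - mono 0 1) := by abel
    show mono 1 (n+2) - mono 0 1 ∈ I
    rw [e]
    exact I.sub_mem (I.add_mem (I.add_mem (hD n) h1) h1) h0
  have down : ∀ n : ℤ, P (n+1) → P (n+2) → P n := by
    intro n h1 h2
    have e : mono 1 n - mono 0 1 =
        (mono 1 n - mono 1 (n+1) - mono 1 (n+1) + mono 1 (n+2))
        + (mono 1 (n+1) - mono 0 1) + (mono 1 (n+1) - mono 0 1)
        - (mono 1 (n+2) - mono 0 1) := by abel
    show mono 1 n - mono 0 1 ∈ I
    rw [e]
    exact I.sub_mem (I.add_mem (I.add_mem (hD n) h1) h1) h2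
  have hPeq : ∀ a b : ℤ, a = b → P a → P b := fun a b h => h ▸ id
  have main : ∀ m : ℤ, P m ∧ P (m+1) := by
    intro m
    induction m using Int.induction_on with
    | zero => exact ⟨hP0, hP1⟩
    | succ i ih =>
        refine ⟨ih.2, hPeq (i+2) _ (by ring) (up i ih.1 ih.2)⟩
    | pred i ih =>
        refine ⟨?_, hPeq (-(i:ℤ)) _ (by ring) ih.1⟩
        refine down (-(i:ℤ)-1) (hPeq (-(i:ℤ)) _ (by ring) ih.1)
          (hPeq (-(i:ℤ)+1) _ (by ring) ?_)
        exact hPeq ((-(i:ℤ))+1) _ (by ring) ih.2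
  exact fun m => (main m).1
end
end

section
/- With R and I as above, for all integers n and m one has sⁿtᵐ − t^{c} ∈ I, where c ∈ {0,1} is the residue of n + nm + m modulo 2. -/
noncomputable section

namespace Aux5

abbrev Q : Type := R2 ⧸ I
def g (n m : ℤ) : Q := QuotientAddGroup.mk' I (mono n m)

lemma mem_zero {x : R2} (h : x ∈ Igen) : (QuotientAddGroup.mk' I x : Q) = 0 := by
  rw [QuotientAddGroup.mk'_apply, QuotientAddGroup.eq_zero_iff]
  exact AddSubgroup.subset_closure h

lemma gA (n : ℤ) : g n n = g n 0 := by
  have := mem_zero (x := mono n n - mono n 0) (Or.inl (Or.inl (Or.inl ⟨n, rfl⟩)))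
  simpa [g, sub_eq_zero] using this

lemma gB (n m : ℤ) : g n m + g (-n) (m - n) = 0 := by
  have := mem_zero (x := mono n m + mono (-n) (m - n)) (Or.inl (Or.inl (Or.inr ⟨n, m, rfl⟩)))
  simpa [g] using this

lemma gC (n m : ℤ) : g n m + g m n = 0 := by
  have := mem_zero (x := mono n m + mono m n) (Or.inl (Or.inr ⟨n, m, rfl⟩))
  simpa [g] using this

lemma mono_mul (a b c d : ℤ) : mono a b * mono c d = mono (a+c) (b+d) := by
  simp [mono, AddMonoidAlgebra.single_mul_single, Prod.mk_add_mk]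

lemma gD (n m : ℤ) : g n m + g n (m+2) = g n (m+1) + g n (m+1) := by
  have key : mono n m * (1 - mono 0 1) ^ 2
      = mono n m + mono n (m+2) - (mono n (m+1) + mono n (m+1)) := by
    have h2 : mono n m * (1 - mono 0 1) ^ 2
        = mono n m + (mono n m * mono 0 1 * mono 0 1) - (mono n m * mono 0 1 + mono n m * mono 0 1) := by ring
    rw [h2, mono_mul, mono_mul]
    norm_num
    ring_nf
  have := mem_zero (x := mono n m * (1 - mono 0 1) ^ 2) (Or.inr ⟨n, m, rfl⟩)
  rw [key] at this
  have h3 : ((mono n m + mono n (m+2) : R2) : Q) = ((mono n (m+1) + mono n (m+1) : R2) : Q) := by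
    rwa [map_sub, sub_eq_zero] at this
  simpa [g] using h3

lemma two_g0 (m : ℤ) : g 0 m + g 0 m = 0 := by
  have := gB 0 m
  simpa using this

lemma step (n k : ℤ) : g n (k+2) - g n (k+1) = g n (k+1) - g n k := by
  rw [sub_eq_sub_iff_add_eq_add, add_comm]
  exact gD n k

lemma dconst (n k : ℤ) : g n (k+1) - g n k = g n 1 - g n 0 := by
  induction k using Int.induction_on with
  | zero => norm_num
  | succ k ih =>
      rw [show ((k:ℤ)+1+1) = (k:ℤ)+2 by ring, step n k, ih]
  | pred k ih =>
      have h := step n (-(k:ℤ)-1)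
      rw [show (-(k:ℤ)-1+2) = -(k:ℤ)+1 by ring, show (-(k:ℤ)-1+1) = -(k:ℤ) by ring] at h
      rw [show (-(k:ℤ)-1+1) = -(k:ℤ) by ring, ← h, ih]

lemma gform (n m : ℤ) : g n m = g n 0 + m • (g n 1 - g n 0) := by
  induction m using Int.induction_on with
  | zero => simp
  | succ k ih =>
      have h : g n ((k:ℤ)+1) = g n k + (g n 1 - g n 0) := by
        rw [← dconst n k]; abel
      rw [h, ih, add_zsmul, one_zsmul]; abel
  | pred k ih =>
      have h := dconst n (-(k:ℤ)-1)
      rw [show (-(k:ℤ)-1+1) = -(k:ℤ) by ring] at h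
      have h2 : g n (-(k:ℤ)-1) = g n (-(k:ℤ)) - (g n 1 - g n 0) := by
        rw [← h]; abel
      rw [h2, ih, sub_zsmul, one_zsmul]; abel

lemma zsmul_mod {x : Q} (h : x + x = 0) (k : ℤ) : k • x = (k % 2) • x := by
  conv_lhs => rw [← Int.mul_ediv_add_emod k 2]
  rw [add_zsmul, mul_comm, mul_zsmul, two_zsmul, h, smul_zero, zero_add]

lemma neg_self {x : Q} (h : x + x = 0) : -x = x := neg_eq_of_add_eq_zero_left h

lemma g11 : g 1 1 = g 1 0 := gA 1
lemma g10 : g 1 0 = g 0 1 :=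
  (eq_neg_of_add_eq_zero_left (gC 1 0)).trans (neg_self (two_g0 1))

lemma gn1 (n : ℤ) : g n 1 = g 0 1 := by
  have h1 : g 1 n = g 1 0 := by
    rw [gform 1 n, g11, sub_self, smul_zero, add_zero]
  rw [eq_neg_of_add_eq_zero_left (gC n 1), h1, g10, neg_self (two_g0 1)]

lemma key (n m : ℤ) : g n m = g 0 ((n + n * m + m) % 2) := by
  have huu := two_g0 1
  have hvv := two_g0 0
  have hww : (g 0 1 - g 0 0) + (g 0 1 - g 0 0) = 0 := by
    have h1 : (g 0 1 - g 0 0) + (g 0 1 - g 0 0) = (g 0 1 + g 0 1) - (g 0 0 + g 0 0) := by abel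
    rw [h1, huu, hvv, sub_zero]
  obtain ⟨p, hp⟩ : ∃ p, n = 2 * p + n % 2 := ⟨n / 2, by omega⟩
  obtain ⟨q, hq⟩ : ∃ q, m = 2 * q + m % 2 := ⟨m / 2, by omega⟩
  have han : n % 2 = 0 ∨ n % 2 = 1 := by omega
  have hbm : m % 2 = 0 ∨ m % 2 = 1 := by omega
  rcases han with ha | ha <;> rcases hbm with hb | hb
  · have hc : (n + n * m + m) % 2 = 0 := by
      rw [ha] at hp; rw [hb] at hq
      have : n + n * m + m = 2 * (p + 2 * p * q + q) := by rw [hp, hq]; ring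
      omega
    have h0 : g n 0 = g 0 0 := by
      rw [eq_neg_of_add_eq_zero_left (gC n 0), gform 0 n, zsmul_mod hww, ha, zero_zsmul,
        add_zero, neg_self hvv]
    rw [hc, gform n m, gn1 n, h0, zsmul_mod hww, hb, zero_zsmul, add_zero]
  · have hc : (n + n * m + m) % 2 = 1 := by
      rw [ha] at hp; rw [hb] at hq
      have : n + n * m + m = 2 * (2 * p + 2 * p * q + q) + 1 := by rw [hp, hq]; ring
      omega
    have h0 : g n 0 = g 0 0 := by
      rw [eq_neg_of_add_eq_zero_left (gC n 0), gform 0 n, zsmul_mod hww, ha, zero_zsmul,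
        add_zero, neg_self hvv]
    rw [hc, gform n m, gn1 n, h0, zsmul_mod hww, hb, one_zsmul]
    abel
  · have hc : (n + n * m + m) % 2 = 1 := by
      rw [ha] at hp; rw [hb] at hq
      have : n + n * m + m = 2 * (p + 2 * p * q + 2 * q) + 1 := by rw [hp, hq]; ring
      omega
    have h0 : g n 0 = g 0 1 := by
      rw [eq_neg_of_add_eq_zero_left (gC n 0), gform 0 n, zsmul_mod hww, ha, one_zsmul,
        show g 0 0 + (g 0 1 - g 0 0) = g 0 1 by abel, neg_self huu]
    rw [hc, gform n m, gn1 n, h0, sub_self, smul_zero, add_zero]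
  · have hc : (n + n * m + m) % 2 = 1 := by
      rw [ha] at hp; rw [hb] at hq
      have : n + n * m + m = 2 * (2 * p * q + 2 * p + 2 * q + 1) + 1 := by rw [hp, hq]; ring
      omega
    have h0 : g n 0 = g 0 1 := by
      rw [eq_neg_of_add_eq_zero_left (gC n 0), gform 0 n, zsmul_mod hww, ha, one_zsmul,
        show g 0 0 + (g 0 1 - g 0 0) = g 0 1 by abel, neg_self huu]
    rw [hc, gform n m, gn1 n, h0, sub_self, smul_zero, add_zero]

end Aux5

theorem stmt5 : ∀ n m : ℤ, mono n m - mono 0 ((n + n * m + m) % 2) ∈ I := by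
  intro n m
  have h := Aux5.key n m
  rw [Aux5.g, Aux5.g, QuotientAddGroup.mk'_apply, QuotientAddGroup.mk'_apply,
    QuotientAddGroup.eq_iff_sub_mem] at h
  exact h
end
end

section
/- With R and I as above, for integers n, m, n′, m′, the monomials sⁿtᵐ and s^{n′}t^{m′} are congruent modulo I if and only if n + nm + m ≡ n′ + n′m′ + m′ (mod 2). -/
noncomputable section

-- basic computations
lemma phi_mono (n m : ℤ) : phi (mono n m) = tA (Jf n m) := by
  show (Finsupp.lsum ℤ (fun p : ℤ × ℤ => LinearMap.toSpanSingleton ℤ A2 (tA (Jf p.1 p.2))))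
    ((Finsupp.single (n, m) 1 : ℤ × ℤ →₀ ℤ)) = tA (Jf n m)
  rw [Finsupp.lsum_single, LinearMap.toSpanSingleton_apply, one_smul]

lemma tA_add_self (a : ZMod 2) : tA a + tA a = 0 := by
  show AddMonoidAlgebra.single a 1 + AddMonoidAlgebra.single a 1 = 0
  rw [← AddMonoidAlgebra.single_add]
  have : (1 + 1 : ZMod 2) = 0 := rfl
  rw [this, AddMonoidAlgebra.single_zero]

lemma jf_eq1 (n : ℤ) : Jf n n = Jf n 0 := by
  unfold Jf; push_cast
  generalize (n : ZMod 2) = x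
  revert x; decide

lemma jf_eq2 (n m : ℤ) : Jf (-n) (m - n) = Jf n m := by
  unfold Jf; push_cast
  generalize (n : ZMod 2) = x
  generalize (m : ZMod 2) = y
  revert x y; decide

lemma jf_eq3 (n m : ℤ) : Jf m n = Jf n m := by
  unfold Jf; push_cast
  generalize (n : ZMod 2) = x
  generalize (m : ZMod 2) = y
  revert x y; decide

lemma jf_eq4 (n m : ℤ) : Jf n (m + 2) = Jf n m := by
  unfold Jf; push_cast
  generalize (n : ZMod 2) = x
  generalize (m : ZMod 2) = y
  revert x y; decide

lemma gen4_eq (n m : ℤ) :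
    mono n m * (1 - mono 0 1) ^ 2
      = mono n m - (mono n (m + 1) + mono n (m + 1)) + mono n (m + 2) := by
  have h1 : mono n m * mono 0 1 = mono n (m + 1) := by
    simp [mono, AddMonoidAlgebra.single_mul_single, Prod.mk_add_mk]
  have h2 : mono n m * (mono 0 1 * mono 0 1) = mono n (m + 2) := by
    simp [mono, AddMonoidAlgebra.single_mul_single, Prod.mk_add_mk]
  calc mono n m * (1 - mono 0 1) ^ 2
      = mono n m - (mono n m * mono 0 1 + mono n m * mono 0 1)
        + mono n m * (mono 0 1 * mono 0 1) := by ring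
    _ = _ := by rw [h1, h2]

lemma phi_vanish : ∀ x ∈ I, phi x = 0 := by
  have h : I ≤ (LinearMap.ker phi).toAddSubgroup := by
    rw [I, AddSubgroup.closure_le]
    rintro x (((⟨n, rfl⟩ | ⟨n, m, rfl⟩) | ⟨n, m, rfl⟩) | ⟨n, m, rfl⟩)
    · simp only [SetLike.mem_coe, Submodule.mem_toAddSubgroup, LinearMap.mem_ker]
      rw [map_sub, phi_mono, phi_mono, jf_eq1, sub_self]
    · simp only [SetLike.mem_coe, Submodule.mem_toAddSubgroup, LinearMap.mem_ker]
      rw [map_add, phi_mono, phi_mono, jf_eq2, tA_add_self]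
    · simp only [SetLike.mem_coe, Submodule.mem_toAddSubgroup, LinearMap.mem_ker]
      rw [map_add, phi_mono, phi_mono, jf_eq3, tA_add_self]
    · simp only [SetLike.mem_coe, Submodule.mem_toAddSubgroup, LinearMap.mem_ker]
      rw [gen4_eq, map_add, map_sub, map_add, phi_mono, phi_mono, phi_mono, jf_eq4,
        tA_add_self, sub_zero, tA_add_self]
  intro x hx
  exact LinearMap.mem_ker.mp (h hx)


-- ## Quotient side
def fq (n m : ℤ) : R2 ⧸ I := QuotientAddGroup.mk (mono n m)

lemma fq_eq_iff (n m n' m' : ℤ) :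
    fq n m = fq n' m' ↔ mono n m - mono n' m' ∈ I :=
  QuotientAddGroup.eq_iff_sub_mem

lemma mk_add (a b : R2) : ((a + b : R2) : R2 ⧸ I) = (a : R2 ⧸ I) + (b : R2 ⧸ I) := rfl

lemma mk_neg (b : R2) : ((-b : R2) : R2 ⧸ I) = -(b : R2 ⧸ I) := rfl

lemma mk_sub (a b : R2) : ((a - b : R2) : R2 ⧸ I) = (a : R2 ⧸ I) - (b : R2 ⧸ I) := by
  rw [sub_eq_add_neg, mk_add, mk_neg, ← sub_eq_add_neg]

lemma rel1 (n : ℤ) : fq n n = fq n 0 :=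
  (fq_eq_iff n n n 0).mpr (AddSubgroup.subset_closure (Or.inl (Or.inl (Or.inl ⟨n, rfl⟩))))

lemma rel2 (n m : ℤ) : fq n m + fq (-n) (m - n) = 0 := by
  unfold fq
  rw [← mk_add]
  exact (QuotientAddGroup.eq_zero_iff _).mpr
    (AddSubgroup.subset_closure (Or.inl (Or.inl (Or.inr ⟨n, m, rfl⟩))))

lemma rel3 (n m : ℤ) : fq n m + fq m n = 0 := by
  unfold fq
  rw [← mk_add]
  exact (QuotientAddGroup.eq_zero_iff _).mpr
    (AddSubgroup.subset_closure (Or.inl (Or.inr ⟨n, m, rfl⟩)))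

lemma rel4 (n m : ℤ) :
    fq n m - (fq n (m + 1) + fq n (m + 1)) + fq n (m + 2) = 0 := by
  unfold fq
  rw [← mk_add, ← mk_sub, ← mk_add, ← gen4_eq]
  exact (QuotientAddGroup.eq_zero_iff _).mpr
    (AddSubgroup.subset_closure (Or.inr ⟨n, m, rfl⟩))

lemma rec2 (n m : ℤ) :
    fq n (m + 2) = (fq n (m + 1) + fq n (m + 1)) - fq n m := by
  have h := rel4 n m
  have h2 := eq_neg_of_add_eq_zero_right h
  rw [h2, neg_sub]

lemma rec_all {M : Type} [AddCommGroup M] (g : ℤ → M)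
    (h : ∀ x : ℤ, g (x + 2) + g x = g (x + 1) + g (x + 1))
    (h0 : g 0 = 0) (h1 : g 1 = 0) : ∀ x : ℤ, g x = 0 := by
  have key : ∀ x : ℤ, g x = 0 ∧ g (x + 1) = 0 := by
    intro x
    induction x using Int.induction_on with
    | zero => exact ⟨h0, by simpa using h1⟩
    | succ i ih =>
        refine ⟨ih.2, ?_⟩
        have hh := h i
        rw [show ((i : ℤ) + 1 + 1) = i + 2 by ring]
        rw [ih.1, ih.2] at hh
        simpa using hh
    | pred i ih =>
        constructor
        · have hh := h (-(i : ℤ) - 1)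
          rw [show (-(i : ℤ) - 1 + 2) = -(i : ℤ) + 1 by ring,
            show (-(i : ℤ) - 1 + 1) = -(i : ℤ) by ring, ih.1, ih.2] at hh
          simpa using hh
        · rw [show (-(i : ℤ) - 1 + 1) = -(i : ℤ) by ring]; exact ih.1
  exact fun x => (key x).1

lemma shiftg {M : Type} [AddCommGroup M] (g : ℤ → M) (h : ∀ x : ℤ, g (x + 2) = g x) :
    ∀ (k x : ℤ), g (x + 2 * k) = g x := by
  intro k
  induction k using Int.induction_on with
  | zero => intro x; norm_num
  | succ i ih =>
      intro x
      rw [show x + 2 * ((i : ℤ) + 1) = (x + 2 * i) + 2 by ring, h, ih]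
  | pred i ih =>
      intro x
      have hh := h (x + 2 * (-(i : ℤ) - 1))
      rw [show x + 2 * (-(i : ℤ) - 1) + 2 = x + 2 * (-(i : ℤ)) by ring] at hh
      rw [← hh]
      exact ih x

lemma tor0 (m : ℤ) : fq 0 m + fq 0 m = 0 := by
  have := rel2 0 m
  simpa using this

lemma twoTor (n m : ℤ) : fq n m + fq n m = 0 := by
  have hrec : ∀ a : ℤ, ∀ x : ℤ,
      (fq a (x + 2) + fq a (x + 2)) + (fq a x + fq a x)
        = (fq a (x + 1) + fq a (x + 1)) + (fq a (x + 1) + fq a (x + 1)) := by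
    intro a x
    rw [rec2 a x]
    abel
  have t1 : ∀ x : ℤ, fq 1 x + fq 1 x = 0 :=
    rec_all (fun x => fq 1 x + fq 1 x) (hrec 1)
      (by show fq 1 0 + fq 1 0 = 0; rw [← rel1 1]; exact rel3 1 1)
      (by show fq 1 1 + fq 1 1 = 0; exact rel3 1 1)
  have tn0 : fq n 0 + fq n 0 = 0 := by
    have hs := rel3 n 0
    have : fq n 0 = -fq 0 n := eq_neg_of_add_eq_zero_left hs
    rw [this, ← neg_add, tor0 n, neg_zero]
  have tn1 : fq n 1 + fq n 1 = 0 := by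
    have hs := rel3 n 1
    have : fq n 1 = -fq 1 n := eq_neg_of_add_eq_zero_left hs
    rw [this, ← neg_add, t1 n, neg_zero]
  exact rec_all (fun x => fq n x + fq n x) (hrec n) tn0 tn1 m

lemma neg_fq (n m : ℤ) : -fq n m = fq n m := neg_eq_of_add_eq_zero_left (twoTor n m)

lemma sym (n m : ℤ) : fq n m = fq m n := by
  have := eq_neg_of_add_eq_zero_left (rel3 n m)
  rw [this, neg_fq]

lemma per_m (n m : ℤ) : fq n (m + 2) = fq n m := by
  rw [rec2, twoTor, zero_sub, neg_fq]

lemma per_n (n m : ℤ) : fq (n + 2) m = fq n m := by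
  rw [sym (n + 2) m, per_m, sym]

lemma fq_reduce (a b : ℤ) : fq a b = fq (a % 2) (b % 2) := by
  have h1 : fq (a % 2 + 2 * (a / 2)) b = fq (a % 2) b :=
    shiftg (fun x => fq x b) (fun x => per_n x b) (a / 2) (a % 2)
  have h2 : fq (a % 2) (b % 2 + 2 * (b / 2)) = fq (a % 2) (b % 2) :=
    shiftg (fun x => fq (a % 2) x) (fun x => per_m (a % 2) x) (b / 2) (b % 2)
  calc fq a b = fq (a % 2 + 2 * (a / 2)) b := by rw [Int.emod_add_mul_ediv]
    _ = fq (a % 2) b := h1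
    _ = fq (a % 2) (b % 2 + 2 * (b / 2)) := by rw [Int.emod_add_mul_ediv]
    _ = fq (a % 2) (b % 2) := h2

lemma c01 : fq 0 1 = fq 1 0 := sym 0 1
lemma c11 : fq 1 1 = fq 1 0 := rel1 1

lemma castmod (a : ℤ) : ((a : ℤ) : ZMod 2) = ((a % 2 : ℤ) : ZMod 2) :=
  (ZMod.intCast_eq_intCast_iff _ _ _).mpr (Int.emod_emod_of_dvd a dvd_rfl).symm

theorem stmt9 : ∀ n m n' m' : ℤ,
    mono n m - mono n' m' ∈ I ↔
      (n + n * m + m) ≡ (n' + n' * m' + m') [ZMOD 2] := by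
  intro n m n' m'
  constructor
  · intro hI
    have h0 := phi_vanish _ hI
    rw [map_sub, phi_mono, phi_mono, sub_eq_zero] at h0
    have : Jf n m = Jf n' m' := AddMonoidAlgebra.single_left_injective (one_ne_zero) h0
    exact (ZMod.intCast_eq_intCast_iff _ _ _).mp this
  · intro h
    have hz : Jf n m = Jf n' m' := (ZMod.intCast_eq_intCast_iff _ _ _).mpr h
    have heq : fq n m = fq n' m' := by
      unfold Jf at hz
      push_cast at hz
      rw [castmod n, castmod m, castmod n', castmod m'] at hz
      rw [fq_reduce n m, fq_reduce n' m']
      rcases Int.emod_two_eq n with h1 | h1 <;> rcases Int.emod_two_eq m with h2 | h2 <;>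
        rcases Int.emod_two_eq n' with h3 | h3 <;> rcases Int.emod_two_eq m' with h4 | h4 <;>
        rw [h1, h2, h3, h4] at hz ⊢ <;>
        first
          | rfl
          | (simp only [c01, c11]; done)
          | (simp only [Int.cast_zero, Int.cast_one] at hz; exact absurd hz (by decide))
    exact (fq_eq_iff n m n' m').mp heq
end
end
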